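/- Let κ > 1 and let 1 < q < p be real numbers. Then ‖A_κ(ω(z))‖_q / ‖ω(z)‖_p → +∞ as z → 1⁻. In particular the ℓ^p → ℓ^q norm of the discrete quantum-limited amplifier A_κ is infinite and is asymptotically achieved by geometric distributions with ratio tending to 1. -/

import Mathlib

/-- The ℓ^p norm of a sequence of complex numbers. -/
noncomputable def lpNorm (p : ℝ) (x : ℕ → ℂ) : ℝ :=
  (∑' n : ℕ, ‖x n‖ ^ p) ^ (1 / p)

/-- The discrete quantum-limited amplifier with parameter `κ`:
`[A_κ(x)]_k = ∑_{n=0}^k C(k,n) (κ-1)^{k-n} κ^{-(k+1)} x_n`. -/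
noncomputable def amp (κ : ℝ) (x : ℕ → ℂ) : ℕ → ℂ :=
  fun k => ∑ n ∈ Finset.range (k + 1),
    (Nat.choose k n : ℂ) * ((κ - 1 : ℝ) : ℂ) ^ (k - n) * ((κ : ℝ) : ℂ)⁻¹ ^ (k + 1) * x n

/-- The geometric probability distribution on ℕ with ratio `z`, as a complex sequence. -/
noncomputable def geom (z : ℝ) : ℕ → ℂ := fun n => (((1 - z) * z ^ n : ℝ) : ℂ)

lemma amp_geom (κ z : ℝ) (hκ : κ ≠ 0) (k : ℕ) :
    amp κ (geom z) k = (((1 - z) / κ * ((κ - 1 + z) / κ) ^ k : ℝ) : ℂ) := by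
  have hκ' : (κ : ℂ) ≠ 0 := by exact_mod_cast hκ
  unfold amp geom
  have : ∀ n ∈ Finset.range (k + 1),
      (Nat.choose k n : ℂ) * ((κ - 1 : ℝ) : ℂ) ^ (k - n) * ((κ : ℝ) : ℂ)⁻¹ ^ (k + 1) *
        (((1 - z) * z ^ n : ℝ) : ℂ)
      = ((κ : ℝ) : ℂ)⁻¹ ^ (k + 1) * ((1 - z : ℝ) : ℂ) *
        (((z : ℝ) : ℂ) ^ n * ((κ - 1 : ℝ) : ℂ) ^ (k - n) * (Nat.choose k n : ℂ)) := by
    intro n _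
    push_cast
    ring
  rw [Finset.sum_congr rfl this, ← Finset.mul_sum, ← add_pow]
  push_cast
  rw [div_pow]
  field_simp
  simp only [one_div, inv_pow]
  field_simp
  ring

lemma lpNorm_geom_seq (r a w : ℝ) (hr : 0 < r) (ha : 0 ≤ a) (hw0 : 0 ≤ w) (hw1 : w < 1) :
    lpNorm r (fun k => ((a * w ^ k : ℝ) : ℂ)) = a * ((1 - w ^ r)⁻¹) ^ (1 / r) := by
  unfold lpNorm
  have key : ∀ k : ℕ, ‖((a * w ^ k : ℝ) : ℂ)‖ ^ r = a ^ r * (w ^ r) ^ k := by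
    intro k
    rw [Complex.norm_real, Real.norm_of_nonneg (by positivity)]
    rw [Real.mul_rpow ha (by positivity), ← Real.rpow_natCast w k, ← Real.rpow_natCast (w ^ r) k,
      ← Real.rpow_mul hw0, ← Real.rpow_mul hw0, mul_comm (k:ℝ) r]
  simp_rw [key]
  rw [tsum_mul_left, tsum_geometric_of_lt_one (by positivity) (Real.rpow_lt_one hw0 hw1 hr),
    Real.mul_rpow (Real.rpow_nonneg ha r)
      (inv_nonneg.mpr (sub_nonneg.mpr (Real.rpow_le_one hw0 hw1.le hr.le))), ← Real.rpow_mul ha,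
    mul_one_div_cancel hr.ne', Real.rpow_one]

theorem amplifier_pq_norm_infinite (κ p q : ℝ) (hκ : 1 < κ) (hq : 1 < q) (hqp : q < p) :
    Filter.Tendsto (fun z => lpNorm q (amp κ (geom z)) / lpNorm p (geom z))
      (nhdsWithin 1 (Set.Iio 1)) Filter.atTop := by
  have hκ0 : (0:ℝ) < κ := by linarith
  have hq0 : (0:ℝ) < q := by linarith
  have hp0 : (0:ℝ) < p := by linarith
  set C : ℝ := κ⁻¹ * ((q / κ) ^ (1 / q))⁻¹ with hC
  have hCpos : 0 < C := by
    have h : (0:ℝ) < (q / κ) ^ (1 / q) := Real.rpow_pos_of_pos (by positivity) _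
    exact mul_pos (inv_pos.mpr hκ0) (inv_pos.mpr h)
  -- the lower bound function tends to atTop
  have hg : Filter.Tendsto (fun z : ℝ => C * (1 - z) ^ (1 / p - 1 / q))
      (nhdsWithin 1 (Set.Iio 1)) Filter.atTop := by
    have h1 : Filter.Tendsto (fun z : ℝ => 1 - z) (nhdsWithin 1 (Set.Iio 1))
        (nhdsWithin 0 (Set.Ioi 0)) := by
      rw [tendsto_nhdsWithin_iff]
      constructor
      · have : Filter.Tendsto (fun z : ℝ => 1 - z) (nhds 1) (nhds 0) := by
          have h := ((continuous_const.sub continuous_id) :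
            Continuous (fun z : ℝ => 1 - z)).tendsto (1:ℝ)
          convert h using 2 <;> simp
        exact this.mono_left nhdsWithin_le_nhds
      · filter_upwards [self_mem_nhdsWithin] with z hz
        simp only [Set.mem_Iio] at hz
        simp only [Set.mem_Ioi]
        linarith
    have h2 : Filter.Tendsto (fun t : ℝ => t ^ (1 / p - 1 / q)) (nhdsWithin 0 (Set.Ioi 0))
        Filter.atTop := by
      have he : (0:ℝ) < 1 / q - 1 / p := by
        rw [sub_pos]
        exact one_div_lt_one_div_of_lt hq0 hqp
      have h3 : Filter.Tendsto (fun t : ℝ => t ^ (1 / q - 1 / p)) (nhdsWithin 0 (Set.Ioi 0))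
          (nhdsWithin 0 (Set.Ioi 0)) := by
        rw [tendsto_nhdsWithin_iff]
        constructor
        · have := (Real.continuousAt_rpow_const 0 (1 / q - 1 / p) (Or.inr he.le)).tendsto
          rw [Real.zero_rpow he.ne'] at this
          exact this.mono_left nhdsWithin_le_nhds
        · filter_upwards [self_mem_nhdsWithin] with t ht
          exact Real.rpow_pos_of_pos ht _
      have h4 := h3.inv_tendsto_nhdsGT_zero
      refine h4.congr' ?_
      filter_upwards [self_mem_nhdsWithin] with t ht
      simp only [Pi.inv_apply]
      rw [← Real.rpow_neg (le_of_lt ht)]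
      ring_nf
    exact (h2.comp h1).const_mul_atTop hCpos
  refine Filter.tendsto_atTop_mono' _ ?_ hg
  filter_upwards [Ioo_mem_nhdsLT_of_mem (by constructor <;> norm_num : (1:ℝ) ∈ Set.Ioc (0:ℝ) 1)]
    with z hz
  obtain ⟨hz0, hz1⟩ := hz
  set w : ℝ := (κ - 1 + z) / κ with hw
  have hw0 : 0 ≤ w := div_nonneg (by linarith) hκ0.le
  have hw1 : w < 1 := by
    rw [hw, div_lt_one hκ0]; linarith
  have h1w : 1 - w = (1 - z) / κ := by rw [hw]; field_simp; ring
  -- exact values of the two norms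
  have hamp : amp κ (geom z) = fun k => (((1 - z) / κ * w ^ k : ℝ) : ℂ) :=
    funext fun k => amp_geom κ z hκ0.ne' k
  have hznn : (0:ℝ) ≤ 1 - z := by linarith
  have hnum : lpNorm q (amp κ (geom z)) = (1 - z) / κ * ((1 - w ^ q)⁻¹) ^ (1 / q) := by
    rw [hamp]; exact lpNorm_geom_seq q ((1 - z) / κ) w hq0 (by positivity) hw0 hw1
  have hden : lpNorm p (geom z) = (1 - z) * ((1 - z ^ p)⁻¹) ^ (1 / p) := by
    have : geom z = fun k => (((1 - z) * z ^ k : ℝ) : ℂ) := rfl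
    rw [this]; exact lpNorm_geom_seq p (1 - z) z hp0 hznn (le_of_lt hz0) hz1
  have hwq : 0 < 1 - w ^ q := sub_pos.mpr (Real.rpow_lt_one hw0 hw1 hq0)
  have hzp : 0 < 1 - z ^ p := sub_pos.mpr (Real.rpow_lt_one (le_of_lt hz0) hz1 hp0)
  set X : ℝ := (1 - z ^ p) ^ (1 / p) with hX
  set Y : ℝ := (1 - w ^ q) ^ (1 / q) with hY
  have hXpos : 0 < X := Real.rpow_pos_of_pos hzp _
  have hYpos : 0 < Y := Real.rpow_pos_of_pos hwq _
  have hratio : lpNorm q (amp κ (geom z)) / lpNorm p (geom z) = κ⁻¹ * (X / Y) := by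
    rw [hnum, hden, Real.inv_rpow (le_of_lt hwq), Real.inv_rpow (le_of_lt hzp), ← hX, ← hY]
    have h1z : (1 - z) ≠ 0 := by linarith
    field_simp
  rw [hratio]
  -- lower bounds
  have hzple : 1 - z ≤ 1 - z ^ p := by
    have : z ^ p ≤ z := by
      have := Real.rpow_le_rpow_of_exponent_ge hz0 hz1.le (le_of_lt (lt_trans hq hqp))
      simpa using this
    linarith
  have hXlb : (1 - z) ^ (1 / p) ≤ X :=
    Real.rpow_le_rpow hznn hzple (by positivity)
  have hYub : Y ≤ (q / κ * (1 - z)) ^ (1 / q) := by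
    have hbern : 1 + q * (w - 1) ≤ w ^ q := by
      have := one_add_mul_self_le_rpow_one_add (s := w - 1) (by linarith) hq.le
      simpa using this
    have : 1 - w ^ q ≤ q / κ * (1 - z) := by
      have h' : q * (1 - w) = q / κ * (1 - z) := by rw [h1w]; ring
      nlinarith
    exact Real.rpow_le_rpow (le_of_lt hwq) this (by positivity)
  have hylb : (0:ℝ) < (q / κ * (1 - z)) ^ (1 / q) :=
    Real.rpow_pos_of_pos (mul_pos (by positivity) (by linarith)) _
  have hdivle : (1 - z) ^ (1 / p) / (q / κ * (1 - z)) ^ (1 / q) ≤ X / Y :=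
    div_le_div₀ hXpos.le hXlb hYpos hYub
  have hfinal : C * (1 - z) ^ (1 / p - 1 / q)
      = κ⁻¹ * ((1 - z) ^ (1 / p) / (q / κ * (1 - z)) ^ (1 / q)) := by
    rw [Real.mul_rpow (by positivity) hznn,
      Real.rpow_sub (by linarith : (0:ℝ) < 1 - z), hC]
    field_simp
  rw [hfinal]
  exact mul_le_mul_of_nonneg_left hdivle (by positivity)
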